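/- Let T>0, h>0, m∈ℕ with m≥1, and a₁,…,a_m ∈ (0,1). Then ∫_{D^m_{T,h}} Π_{j=1}^m u_j^{−a_j} du ≤ (Π_{j=1}^m Γ(1−a_j) / Γ(m+1−Σ_{i=1}^m a_i)) · h^{Σ_{i=1}^m (1−a_i)}, where D^m_{T,h} = {u ∈ ℝ^m : u₁ > T, u_i ≥ 0 for i=2,…,m, and u₁+u₂+⋯+u_m < T+h} and Γ denotes the Gamma function. -/

import Mathlib

open MeasureTheory

noncomputable section

lemma aux_measS (m : ℕ) (c : ℝ) :
    MeasurableSet {w : Fin m → ℝ | (∀ i, 0 ≤ w i) ∧ ∑ i, w i ≤ c} := by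
  apply MeasurableSet.inter
  · show MeasurableSet {w : Fin m → ℝ | ∀ i, 0 ≤ w i}
    rw [Set.setOf_forall]
    exact MeasurableSet.iInter fun i =>
      measurableSet_le measurable_const (measurable_pi_apply i)
  · exact measurableSet_le (Finset.measurable_sum _ fun i _ => measurable_pi_apply i)
      measurable_const

lemma aux_measF (m : ℕ) (a : Fin m → ℝ) :
    Measurable fun w : Fin m → ℝ => ∏ j, ENNReal.ofReal (w j ^ (-(a j))) :=
  Finset.measurable_prod _ fun j _ => Measurable.ennreal_ofReal (by fun_prop)

lemma aux_empty (m : ℕ) (c : ℝ) (hc : c < 0) :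
    {w : Fin m → ℝ | (∀ i, 0 ≤ w i) ∧ ∑ i, w i ≤ c} = ∅ := by
  ext w
  simp only [Set.mem_setOf_eq, Set.mem_empty_iff_false, iff_false, not_and]
  intro h1 h2
  have : (0:ℝ) ≤ ∑ i, w i := Finset.sum_nonneg fun i _ => h1 i
  linarith

lemma aux_beta {p q h : ℝ} (hp : 0 < p) (hq : 0 < q) (hh : 0 < h) :
    ∫ t in (0:ℝ)..h, t ^ (p - 1) * (h - t) ^ (q - 1)
      = h ^ (p + q - 1) * (Real.Gamma p * Real.Gamma q / Real.Gamma (p + q)) := by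
  have hpq : (0:ℝ) < p + q := by linarith
  have hΓ : (0:ℝ) < Real.Gamma (p + q) := Real.Gamma_pos_of_pos hpq
  have hB : Complex.betaIntegral p q
      = ((Real.Gamma p * Real.Gamma q / Real.Gamma (p + q) : ℝ) : ℂ) := by
    have h1 := Complex.Gamma_mul_Gamma_eq_betaIntegral (s := (p:ℂ)) (t := (q:ℂ))
      (by simpa using hp) (by simpa using hq)
    rw [show ((p:ℂ) + q) = ((p + q : ℝ) : ℂ) by push_cast; ring] at h1
    rw [Complex.Gamma_ofReal, Complex.Gamma_ofReal, Complex.Gamma_ofReal] at h1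
    rw [Complex.ofReal_div, Complex.ofReal_mul, eq_div_iff (by
      exact_mod_cast hΓ.ne')]
    rw [h1]; ring
  have hs := Complex.betaIntegral_scaled (p:ℂ) (q:ℂ) hh
  have key : (∫ x in (0:ℝ)..h, ((x:ℂ)) ^ ((p:ℂ) - 1) * (((h:ℝ):ℂ) - x) ^ ((q:ℂ) - 1))
      = ((∫ t in (0:ℝ)..h, t ^ (p - 1) * (h - t) ^ (q - 1) : ℝ) : ℂ) := by
    rw [← intervalIntegral.integral_ofReal]
    refine intervalIntegral.integral_congr fun x hx => ?_
    rw [Set.uIcc_of_le hh.le] at hx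
    rw [Complex.ofReal_mul, Complex.ofReal_cpow hx.1,
      Complex.ofReal_cpow (by linarith [hx.2] : (0:ℝ) ≤ h - x)]
    push_cast
    ring
  rw [key, hB] at hs
  have hhc : ((h:ℂ)) ^ ((p:ℂ) + q - 1) = ((h ^ (p + q - 1) : ℝ) : ℂ) := by
    rw [Complex.ofReal_cpow hh.le]; push_cast; ring_nf
  rw [hhc, ← Complex.ofReal_mul] at hs
  exact_mod_cast hs

lemma aux_betaIntegrable {p q h : ℝ} (hp : 0 < p) (hq : 0 < q) (hh : 0 < h) :
    IntervalIntegrable (fun t => t ^ (p - 1) * (h - t) ^ (q - 1)) volume 0 (h:ℝ) := by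
  have h2 : (0:ℝ) < h / 2 := by linarith
  apply IntervalIntegrable.trans (b := h / 2)
  · apply IntervalIntegrable.mul_continuousOn
    · exact intervalIntegral.intervalIntegrable_rpow' (by linarith)
    · apply ContinuousOn.rpow_const (continuous_const.sub continuous_id).continuousOn
      intro x hx
      rw [Set.uIcc_of_le h2.le] at hx
      left
      show h - x ≠ 0
      have hx2 := hx.2
      intro hcon
      linarith
  · apply IntervalIntegrable.continuousOn_mul
    · have := ((intervalIntegral.intervalIntegrable_rpow' (a := 0) (b := h / 2)
        (r := q - 1) (by linarith)).comp_sub_left h).symm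
      simpa [show h - h / 2 = h / 2 by ring] using this
    · apply ContinuousOn.rpow_const continuous_id.continuousOn
      intro x hx
      rw [Set.uIcc_of_le (by linarith : h / 2 ≤ h)] at hx
      left
      simp only [id_eq]
      have hx1 := hx.1
      intro hcon
      linarith

lemma aux_dirichlet :
    ∀ (m : ℕ) (a : Fin m → ℝ), (∀ j, a j ∈ Set.Ioo (0:ℝ) 1) → ∀ h : ℝ, 0 < h →
    ∫⁻ v in {v : Fin m → ℝ | (∀ i, 0 ≤ v i) ∧ ∑ i, v i ≤ h},
        ∏ j, ENNReal.ofReal (v j ^ (-(a j)))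
      = ENNReal.ofReal ((∏ j, Real.Gamma (1 - a j)) / Real.Gamma ((m : ℝ) + 1 - ∑ i, a i)
          * h ^ (∑ i, (1 - a i))) := by
  intro m
  induction m with
  | zero =>
    intro a ha h hh
    have hset : {v : Fin 0 → ℝ | (∀ i, 0 ≤ v i) ∧ ∑ i, v i ≤ h} = Set.univ := by
      ext v
      simpa using hh.le
    have huniv : (volume : Measure (Fin 0 → ℝ)) Set.univ = 1 := by
      rw [volume_pi, Measure.pi_univ]
      simp
    rw [hset]
    simp [huniv, Real.Gamma_one]
  | succ m ih =>
    intro a ha h hh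
    set a' : Fin m → ℝ := fun j => a j.succ with ha'def
    have ha' : ∀ j, a' j ∈ Set.Ioo (0:ℝ) 1 := fun j => ha j.succ
    have ha0 := ha 0
    set p : ℝ := 1 - a 0 with hpdef
    set q : ℝ := (m : ℝ) + 1 - ∑ i, a' i with hqdef
    have hp : 0 < p := by simp only [hpdef]; linarith [ha0.2]
    have hsum' : ∑ i, a' i ≤ (m : ℝ) := by
      calc ∑ i, a' i ≤ ∑ _i : Fin m, (1:ℝ) := Finset.sum_le_sum fun i _ => (ha' i).2.le
      _ = m := by simp
    have hq : 0 < q := by simp only [hqdef]; linarith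
    have hs : ∑ i : Fin m, (1 - a' i) = q - 1 := by
      rw [Finset.sum_sub_distrib]
      simp only [hqdef, Finset.sum_const, Finset.card_univ, Fintype.card_fin, nsmul_eq_mul,
        mul_one]
      ring
    set C : ℝ := (∏ j, Real.Gamma (1 - a' j)) / Real.Gamma q with hCdef
    have hC0 : 0 ≤ C :=
      div_nonneg (Finset.prod_nonneg fun j _ =>
        (Real.Gamma_pos_of_pos (by linarith [(ha' j).2])).le) (Real.Gamma_pos_of_pos hq).le
    have ihC : ∀ c : ℝ, 0 < c →
        (∫⁻ w in {w : Fin m → ℝ | (∀ i, 0 ≤ w i) ∧ ∑ i, w i ≤ c},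
          ∏ j, ENNReal.ofReal (w j ^ (-(a' j))))
        = ENNReal.ofReal (C * c ^ (q - 1)) := by
      intro c hc
      rw [ih a' ha' c hc, hs, hCdef, hqdef]
    set S : Set (Fin (m+1) → ℝ) := {v | (∀ i, 0 ≤ v i) ∧ ∑ i, v i ≤ h} with hSdef
    set f : (Fin (m+1) → ℝ) → ENNReal := fun v => ∏ j, ENNReal.ofReal (v j ^ (-(a j)))
      with hfdef
    have hSm : MeasurableSet S := aux_measS (m+1) h
    have hfm : Measurable f := aux_measF (m+1) a
    have hmp := MeasureTheory.volume_preserving_piFinSuccAbove (fun _ : Fin (m+1) => ℝ) 0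
    have hg : Measurable (S.indicator f) := hfm.indicator hSm
    have key : (∫⁻ v in S, f v)
        = ∫⁻ t : ℝ, ∫⁻ w : Fin m → ℝ, S.indicator f (Fin.cons t w) := by
      have hmeasz : Measurable fun z : ℝ × (Fin m → ℝ) =>
          S.indicator f ((MeasurableEquiv.piFinSuccAbove (fun _ : Fin (m+1) => ℝ) 0).symm z) :=
        hg.comp (MeasurableEquiv.measurable _)
      rw [← lintegral_indicator hSm f, ← (hmp.symm _).lintegral_comp hg, Measure.volume_eq_prod,
        lintegral_prod _ hmeasz.aemeasurable]
      simp_rw [MeasurableEquiv.piFinSuccAbove_symm_apply, Fin.insertNthEquiv,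
        Equiv.coe_fn_mk, Fin.insertNth_zero']
    set G : ℝ → ENNReal := fun t => ENNReal.ofReal (t ^ (-(a 0))) *
      ∫⁻ w in {w : Fin m → ℝ | (∀ i, 0 ≤ w i) ∧ ∑ i, w i ≤ h - t},
        ∏ j, ENNReal.ofReal (w j ^ (-(a' j))) with hGdef
    have inner : ∀ t : ℝ, (∫⁻ w : Fin m → ℝ, S.indicator f (Fin.cons t w))
        = Set.indicator (Set.Ici (0:ℝ)) G t := by
      intro t
      by_cases ht : (0:ℝ) ≤ t
      · rw [Set.indicator_of_mem (Set.mem_Ici.mpr ht)]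
        have hfc : ∀ w : Fin m → ℝ, S.indicator f (Fin.cons t w)
            = ENNReal.ofReal (t ^ (-(a 0))) *
              Set.indicator {w : Fin m → ℝ | (∀ i, 0 ≤ w i) ∧ ∑ i, w i ≤ h - t}
                (fun w => ∏ j, ENNReal.ofReal (w j ^ (-(a' j)))) w := by
          intro w
          have hmem : Fin.cons t w ∈ S ↔ ((∀ i, 0 ≤ w i) ∧ ∑ i, w i ≤ h - t) := by
            simp only [hSdef, Set.mem_setOf_eq, Fin.forall_fin_succ, Fin.sum_univ_succ,
              Fin.cons_zero, Fin.cons_succ]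
            constructor
            · rintro ⟨⟨-, h1⟩, h2⟩; exact ⟨h1, by linarith⟩
            · rintro ⟨h1, h2⟩; exact ⟨⟨ht, h1⟩, by linarith⟩
          have hprod : f (Fin.cons t w)
              = ENNReal.ofReal (t ^ (-(a 0))) * ∏ j, ENNReal.ofReal (w j ^ (-(a' j))) := by
            simp only [hfdef]
            rw [Fin.prod_univ_succ]
            simp only [Fin.cons_zero, Fin.cons_succ, ha'def]
          by_cases hw : w ∈ {w : Fin m → ℝ | (∀ i, 0 ≤ w i) ∧ ∑ i, w i ≤ h - t}
          · rw [Set.indicator_of_mem (hmem.mpr hw) f, Set.indicator_of_mem hw, hprod]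
          · rw [Set.indicator_of_notMem (fun hc => hw (hmem.mp hc)) f,
              Set.indicator_of_notMem hw, mul_zero]
        simp_rw [hfc]
        rw [lintegral_const_mul' _ _ ENNReal.ofReal_ne_top,
          lintegral_indicator (aux_measS m (h - t)) _]
      · rw [Set.indicator_of_notMem (by simpa using ht)]
        have hz : ∀ w : Fin m → ℝ, S.indicator f (Fin.cons t w) = 0 := by
          intro w
          apply Set.indicator_of_notMem
          intro hc
          exact ht (by simpa using hc.1 0)
        simp [hz]
    have hnull : volume ({0, h} : Set ℝ) = 0 :=
      Set.Countable.measure_zero (by exact (Set.countable_singleton h).insert 0) _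
    have hae : Set.indicator (Set.Ici (0:ℝ)) G =ᵐ[volume] Set.indicator (Set.Ioo 0 h) G := by
      refine Filter.eventuallyEq_of_mem (compl_mem_ae_iff.mpr hnull) fun t ht => ?_
      simp only [Set.mem_compl_iff, Set.mem_insert_iff, Set.mem_singleton_iff, not_or] at ht
      rcases lt_trichotomy t 0 with h1 | h1 | h1
      · rw [Set.indicator_of_notMem (by simpa using not_le.mpr h1),
          Set.indicator_of_notMem (fun hc => absurd hc.1 (not_lt.mpr h1.le))]
      · exact absurd h1 ht.1
      · rcases lt_trichotomy t h with h2 | h2 | h2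
        · rw [Set.indicator_of_mem (Set.mem_Ici.mpr h1.le), Set.indicator_of_mem (Set.mem_Ioo.mpr ⟨h1, h2⟩)]
        · exact absurd h2 ht.2
        · rw [Set.indicator_of_mem (Set.mem_Ici.mpr h1.le),
            Set.indicator_of_notMem (fun hc => absurd hc.2 (not_lt.mpr h2.le))]
          have hE : {w : Fin m → ℝ | (∀ i, 0 ≤ w i) ∧ ∑ i, w i ≤ h - t} = ∅ :=
            aux_empty m _ (by linarith)
          simp [hGdef, hE]
    have hIoo : (∫⁻ t in Set.Ioo (0:ℝ) h, G t)
        = ∫⁻ t in Set.Ioo (0:ℝ) h, ENNReal.ofReal (C * (t ^ (p-1) * (h - t) ^ (q-1))) := by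
      refine setLIntegral_congr_fun measurableSet_Ioo (fun t ht => ?_)
      rw [hGdef]
      simp only
      rw [ihC (h - t) (by linarith [ht.2]),
        ← ENNReal.ofReal_mul (Real.rpow_nonneg ht.1.le _)]
      congr 1
      rw [show -(a 0) = p - 1 by rw [hpdef]; ring]
      ring
    have hInt : IntegrableOn (fun t => C * (t ^ (p-1) * (h - t) ^ (q-1)))
        (Set.Ioo (0:ℝ) h) volume := by
      have hbi := aux_betaIntegrable hp hq hh
      rw [intervalIntegrable_iff_integrableOn_Ioc_of_le hh.le] at hbi
      exact (hbi.mono_set Set.Ioo_subset_Ioc_self).const_mul C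
    have hnn : 0 ≤ᵐ[volume.restrict (Set.Ioo (0:ℝ) h)]
        fun t => C * (t ^ (p-1) * (h - t) ^ (q-1)) := by
      filter_upwards [ae_restrict_mem measurableSet_Ioo] with t ht
      exact mul_nonneg hC0 (mul_nonneg (Real.rpow_nonneg ht.1.le _)
        (Real.rpow_nonneg (by linarith [ht.2]) _))
    have hval : (∫ t in Set.Ioo (0:ℝ) h, C * (t ^ (p-1) * (h - t) ^ (q-1)))
        = C * (h ^ (p + q - 1) * (Real.Gamma p * Real.Gamma q / Real.Gamma (p + q))) := by
      rw [← MeasureTheory.integral_Ioc_eq_integral_Ioo, ← intervalIntegral.integral_of_le hh.le,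
        intervalIntegral.integral_const_mul, aux_beta hp hq hh]
    calc (∫⁻ v in S, f v)
        = ∫⁻ t : ℝ, Set.indicator (Set.Ici (0:ℝ)) G t := by rw [key]; simp_rw [inner]
      _ = ∫⁻ t : ℝ, Set.indicator (Set.Ioo (0:ℝ) h) G t := lintegral_congr_ae hae
      _ = ∫⁻ t in Set.Ioo (0:ℝ) h, G t := lintegral_indicator measurableSet_Ioo G
      _ = ∫⁻ t in Set.Ioo (0:ℝ) h, ENNReal.ofReal (C * (t ^ (p-1) * (h - t) ^ (q-1))) := hIoo
      _ = ENNReal.ofReal (∫ t in Set.Ioo (0:ℝ) h, C * (t ^ (p-1) * (h - t) ^ (q-1))) :=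
          (MeasureTheory.ofReal_integral_eq_lintegral_ofReal hInt hnn).symm
      _ = ENNReal.ofReal ((∏ j, Real.Gamma (1 - a j)) /
            Real.Gamma (((m:ℕ)+1 : ℝ) + 1 - ∑ i, a i) * h ^ (∑ i, (1 - a i))) := by
          rw [hval]
          congr 1
          have e1 : ∑ i : Fin (m+1), (1 - a i) = p + q - 1 := by
            rw [Fin.sum_univ_succ]
            have : ∑ i : Fin m, (1 - a i.succ) = q - 1 := hs
            rw [this, hpdef]; ring
          have e2 : ((m:ℝ) + 1) + 1 - ∑ i : Fin (m+1), a i = p + q := by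
            rw [Fin.sum_univ_succ]
            have : ∑ i : Fin m, a i.succ = ∑ i, a' i := rfl
            rw [this, hpdef, hqdef]; ring
          have e3 : ∏ j : Fin (m+1), Real.Gamma (1 - a j)
              = Real.Gamma p * ∏ j : Fin m, Real.Gamma (1 - a' j) := by
            rw [Fin.prod_univ_succ, hpdef]
          rw [e1, e2, e3, hCdef]
          have hΓq : Real.Gamma q ≠ 0 := (Real.Gamma_pos_of_pos hq).ne'
          have hΓpq : Real.Gamma (p + q) ≠ 0 :=
            (Real.Gamma_pos_of_pos (by linarith)).ne'
          field_simp
          try ring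
      _ = ENNReal.ofReal ((∏ j, Real.Gamma (1 - a j)) /
            Real.Gamma (((m+1:ℕ) : ℝ) + 1 - ∑ i, a i) * h ^ (∑ i, (1 - a i))) := by
          norm_num

theorem stmt12
    (T h : ℝ) (hT : 0 < T) (hh : 0 < h) (m : ℕ) (hm : 1 ≤ m)
    (a : Fin m → ℝ) (ha : ∀ j, a j ∈ Set.Ioo (0 : ℝ) 1) :
    ∫ u in {u : Fin m → ℝ | T < u ⟨0, hm⟩ ∧
        (∀ i : Fin m, i ≠ ⟨0, hm⟩ → 0 ≤ u i) ∧ ∑ i, u i < T + h},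
        ∏ j, (u j) ^ (-(a j))
      ≤ (∏ j, Real.Gamma (1 - a j)) / Real.Gamma ((m : ℝ) + 1 - ∑ i, a i)
          * h ^ (∑ i, (1 - a i)) := by
  set i0 : Fin m := ⟨0, hm⟩ with hi0def
  set D : Set (Fin m → ℝ) :=
    {u | T < u i0 ∧ (∀ i : Fin m, i ≠ i0 → 0 ≤ u i) ∧ ∑ i, u i < T + h} with hDdef
  have haj : ∀ j, (0:ℝ) < 1 - a j := fun j => by linarith [(ha j).2]
  set R : ℝ := (∏ j, Real.Gamma (1 - a j)) / Real.Gamma ((m : ℝ) + 1 - ∑ i, a i)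
      * h ^ (∑ i, (1 - a i)) with hRdef
  have hsuma : ∑ i, a i ≤ (m : ℝ) := by
    calc ∑ i, a i ≤ ∑ _i : Fin m, (1:ℝ) := Finset.sum_le_sum fun i _ => (ha i).2.le
    _ = m := by simp
  have hR0 : 0 ≤ R := by
    refine mul_nonneg (div_nonneg ?_ ?_) (Real.rpow_nonneg hh.le _)
    · exact Finset.prod_nonneg fun j _ => (Real.Gamma_pos_of_pos (haj j)).le
    · exact (Real.Gamma_pos_of_pos (by linarith)).le
  have hDm : MeasurableSet D := by
    refine (measurableSet_lt measurable_const (measurable_pi_apply i0)).inter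
      (MeasurableSet.inter ?_ ?_)
    · show MeasurableSet {u : Fin m → ℝ | ∀ i : Fin m, i ≠ i0 → 0 ≤ u i}
      rw [Set.setOf_forall]
      refine MeasurableSet.iInter fun i => ?_
      rcases eq_or_ne i i0 with hi | hi
      · simp [hi]
      · have : {u : Fin m → ℝ | i ≠ i0 → 0 ≤ u i} = {u : Fin m → ℝ | 0 ≤ u i} := by
          ext u; simp [hi]
        rw [this]
        exact measurableSet_le measurable_const (measurable_pi_apply i)
    · exact measurableSet_lt (Finset.measurable_sum _ fun i _ => measurable_pi_apply i)
        measurable_const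
  have hmeasP : Measurable fun u : Fin m → ℝ => ∏ j, (u j) ^ (-(a j)) :=
    Finset.measurable_prod _ fun j _ => by fun_prop
  have hDpos : ∀ u ∈ D, ∀ j, 0 ≤ u j := by
    intro u hu j
    rcases eq_or_ne j i0 with hj | hj
    · rw [hj]; linarith [hu.1]
    · exact hu.2.1 j hj
  have h1 : (∫ u in D, ∏ j, (u j) ^ (-(a j)))
      = (∫⁻ u in D, ENNReal.ofReal (∏ j, (u j) ^ (-(a j)))).toReal := by
    rw [integral_eq_lintegral_of_nonneg_ae]
    · filter_upwards [ae_restrict_mem hDm] with u hu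
      exact Finset.prod_nonneg fun j _ => Real.rpow_nonneg (hDpos u hu j) _
    · exact hmeasP.aestronglyMeasurable
  have h2 : (∫⁻ u in D, ENNReal.ofReal (∏ j, (u j) ^ (-(a j))))
      = ∫⁻ u in D, ∏ j, ENNReal.ofReal ((u j) ^ (-(a j))) := by
    refine setLIntegral_congr_fun hDm (fun u hu => ?_)
    exact ENNReal.ofReal_prod_of_nonneg fun j _ => Real.rpow_nonneg (hDpos u hu j) _
  set F : (Fin m → ℝ) → ENNReal := fun u => ∏ j, ENNReal.ofReal ((u j) ^ (-(a j)))
    with hFdef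
  have hFm : Measurable F := aux_measF m a
  set c : Fin m → ℝ := Pi.single i0 T with hcdef
  have hsumc : ∑ i, c i = T := by
    rw [hcdef]
    simp [Finset.sum_pi_single']
  have htrans : MeasurePreserving (fun v : Fin m → ℝ => v + c) volume volume :=
    measurePreserving_add_right volume c
  have h3 : (∫⁻ u in D, F u) = ∫⁻ v, D.indicator F (v + c) := by
    rw [← lintegral_indicator hDm F, ← htrans.lintegral_comp (hFm.indicator hDm)]
  have h4 : ∀ v : Fin m → ℝ, D.indicator F (v + c)
      ≤ Set.indicator {w : Fin m → ℝ | (∀ i, 0 ≤ w i) ∧ ∑ i, w i ≤ h} F v := by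
    intro v
    by_cases hv : v + c ∈ D
    · rw [Set.indicator_of_mem hv]
      have hvc0 : (v + c) i0 = v i0 + T := by simp [hcdef]
      have hvcj : ∀ j, j ≠ i0 → (v + c) j = v j := by
        intro j hj; simp [hcdef, Pi.single_eq_of_ne hj]
      have hvi0 : 0 < v i0 := by
        have := hv.1; rw [hvc0] at this; linarith
      have hsumvc : ∑ i, (v + c) i = (∑ i, v i) + T := by
        simp only [Pi.add_apply]
        rw [Finset.sum_add_distrib, hsumc]
      have hmemS : v ∈ {w : Fin m → ℝ | (∀ i, 0 ≤ w i) ∧ ∑ i, w i ≤ h} := by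
        constructor
        · intro i
          rcases eq_or_ne i i0 with hi | hi
          · rw [hi]; exact hvi0.le
          · have := hv.2.1 i hi; rwa [hvcj i hi] at this
        · have := hv.2.2; rw [hsumvc] at this; linarith
      rw [Set.indicator_of_mem hmemS]
      refine Finset.prod_le_prod' fun j _ => ?_
      rcases eq_or_ne j i0 with hj | hj
      · rw [hj, hvc0]
        exact ENNReal.ofReal_le_ofReal
          (Real.rpow_le_rpow_of_nonpos hvi0 (by linarith) (by linarith [(ha i0).1]))
      · rw [hvcj j hj]
    · rw [Set.indicator_of_notMem hv]
      exact zero_le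
  calc (∫ u in D, ∏ j, (u j) ^ (-(a j)))
      = (∫⁻ u in D, F u).toReal := by rw [h1, h2]
    _ ≤ R := by
        refine ENNReal.toReal_le_of_le_ofReal hR0 ?_
        rw [h3]
        calc (∫⁻ v, D.indicator F (v + c))
            ≤ ∫⁻ v, Set.indicator {w : Fin m → ℝ | (∀ i, 0 ≤ w i) ∧ ∑ i, w i ≤ h} F v :=
              lintegral_mono h4
          _ = ∫⁻ v in {w : Fin m → ℝ | (∀ i, 0 ≤ w i) ∧ ∑ i, w i ≤ h}, F v :=
              lintegral_indicator (aux_measS m h) F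
          _ = ENNReal.ofReal R := aux_dirichlet m a ha h hh

end
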